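/- Let A be the 3×3 complex Jordan block with eigenvalue 0 (the matrix with A₁₂ = A₂₃ = 1 and all other entries 0), let 0 < r ≤ 1, and let s ∈ ℝ. Set σ := r·exp(i s / r) and μ := (exp(i s / r)/(2π))•(σ•1 − A)⁻¹ + ((exp(i s / r)/(2π))•(σ•1 − A)⁻¹)ᴴ. Then μ is Hermitian, for every x ∈ EuclideanSpace ℂ (Fin 3) one has Re⟪μ x, x⟫ ≥ ((2r² − 1)/(2π r³))·‖x‖², and there exists a nonzero x with Re⟪μ x, x⟫ = ((2r² − 1)/(2π r³))·‖x‖²; that is, the smallest eigenvalue of μ equals (2r² − 1)/(2π r³) (independent of s). -/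

import Mathlib

open Matrix Complex
open scoped Real

set_option maxHeartbeats 1000000 in

theorem jordan_block_mu_smallest_eigenvalue
    (r : ℝ) (hr0 : 0 < r) (hr1 : r ≤ 1) (s : ℝ)
    (A : Matrix (Fin 3) (Fin 3) ℂ)
    (hA : A = !![0, 1, 0; 0, 0, 1; 0, 0, 0])
    (σ : ℂ) (hσ : σ = (r : ℂ) * Complex.exp (I * s / r))
    (μ : Matrix (Fin 3) (Fin 3) ℂ)
    (hμ : μ = (Complex.exp (I * s / r) / (2 * (π : ℂ))) •
          (σ • (1 : Matrix (Fin 3) (Fin 3) ℂ) - A)⁻¹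
        + ((Complex.exp (I * s / r) / (2 * (π : ℂ))) •
          (σ • (1 : Matrix (Fin 3) (Fin 3) ℂ) - A)⁻¹)ᴴ) :
    μ.IsHermitian ∧
    (∀ x : EuclideanSpace ℂ (Fin 3),
      (2 * r ^ 2 - 1) / (2 * π * r ^ 3) * ‖x‖ ^ 2 ≤
        (inner ℂ ((Matrix.toEuclideanCLM (𝕜 := ℂ) μ) x) x : ℂ).re) ∧
    ∃ x : EuclideanSpace ℂ (Fin 3), x ≠ 0 ∧
      (inner ℂ ((Matrix.toEuclideanCLM (𝕜 := ℂ) μ) x) x : ℂ).re =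
        (2 * r ^ 2 - 1) / (2 * π * r ^ 3) * ‖x‖ ^ 2 := by
  have hπ : (0:ℝ) < π := Real.pi_pos
  have hrC : (r:ℂ) ≠ 0 := by exact_mod_cast hr0.ne'
  have hπC : (π:ℂ) ≠ 0 := by exact_mod_cast hπ.ne'
  have hHerm : μ.IsHermitian := by
    rw [hμ]
    exact Matrix.isHermitian_add_transpose_self _
  set ω : ℂ := Complex.exp (I * s / r) with hωdef
  clear_value ω
  have hω0 : ω ≠ 0 := hωdef ▸ Complex.exp_ne_zero _
  have habs : ‖ω‖ = 1 := by
    rw [hωdef, show I * (s:ℂ) / r = ((s/r : ℝ):ℂ) * I by push_cast; ring]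
    exact Complex.norm_exp_ofReal_mul_I _
  have hωc : ω * (starRingEnd ℂ) ω = 1 := by
    rw [Complex.mul_conj, Complex.normSq_eq_norm_sq, habs]; norm_num
  have hconj : ω⁻¹ = (starRingEnd ℂ) ω := inv_eq_of_mul_eq_one_right hωc
  have hσ0 : σ ≠ 0 := by rw [hσ]; exact mul_ne_zero hrC hω0
  have hinv : (σ • (1 : Matrix (Fin 3) (Fin 3) ℂ) - A)⁻¹ =
      !![σ⁻¹, σ⁻¹^2, σ⁻¹^3; 0, σ⁻¹, σ⁻¹^2; 0, 0, σ⁻¹] := by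
    apply Matrix.inv_eq_right_inv
    ext i j
    fin_cases i <;> fin_cases j <;>
      simp [hA, Matrix.mul_apply, Fin.sum_univ_succ, Matrix.one_apply] <;>
      field_simp <;> ring
  have hμE : μ = !![(1/(π*r) : ℂ), (starRingEnd ℂ) ω/(2*π*r^2), ((starRingEnd ℂ) ω)^2/(2*π*r^3);
      ω/(2*π*r^2), 1/(π*r), (starRingEnd ℂ) ω/(2*π*r^2);
      ω^2/(2*π*r^3), ω/(2*π*r^2), 1/(π*r)] := by
    rw [hμ, hinv, hσ]
    ext i j
    fin_cases i <;> fin_cases j <;>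
      simp [Complex.star_def, Matrix.conjTranspose_apply, Matrix.smul_apply,
        mul_inv, map_inv₀, _root_.map_mul, map_pow, map_div₀, map_ofNat,
        Complex.conj_ofReal, hconj, inv_inv, Complex.conj_conj, Matrix.vecHead, Matrix.vecTail]
    · linear_combination ((r:ℂ)⁻¹ * ((π:ℂ))⁻¹) * hωc
    · linear_combination ((starRingEnd ℂ) ω * ((r:ℂ)⁻¹)^2 / (2*(π:ℂ))) * hωc
    · linear_combination (((starRingEnd ℂ) ω)^2 * ((r:ℂ)⁻¹)^3 / (2*(π:ℂ))) * hωc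
    · linear_combination (ω * ((r:ℂ)⁻¹)^2 / (2*(π:ℂ))) * hωc
    · linear_combination ((r:ℂ)⁻¹ * ((π:ℂ))⁻¹) * hωc
    · linear_combination ((starRingEnd ℂ) ω * ((r:ℂ)⁻¹)^2 / (2*(π:ℂ))) * hωc
    · linear_combination (ω^2 * ((r:ℂ)⁻¹)^3 / (2*(π:ℂ))) * hωc
    · linear_combination (ω * ((r:ℂ)⁻¹)^2 / (2*(π:ℂ))) * hωc
    · linear_combination ((r:ℂ)⁻¹ * ((π:ℂ))⁻¹) * hωc
  -- norm formula
  have hnorm : ∀ x : EuclideanSpace ℂ (Fin 3), ‖x‖^2 =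
      Complex.normSq (x 0) + Complex.normSq (x 1) + Complex.normSq (x 2) := by
    intro x
    rw [EuclideanSpace.norm_eq, Real.sq_sqrt (by positivity), Fin.sum_univ_three]
    simp [Complex.normSq_eq_norm_sq]
  -- key identity
  have key : ∀ x : EuclideanSpace ℂ (Fin 3),
      2 * π * r^3 * (inner ℂ ((Matrix.toEuclideanCLM (𝕜 := ℂ) μ) x) x : ℂ).re =
        (2*r^2 - 1) * (Complex.normSq (x 0) + Complex.normSq (x 1) + Complex.normSq (x 2))
        + Complex.normSq (ω * x 0 + (r:ℂ) * x 1 + (starRingEnd ℂ) ω * x 2)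
        + (1 - r^2) * Complex.normSq (x 1) := by
    intro x
    have hformula : (inner ℂ ((Matrix.toEuclideanCLM (𝕜 := ℂ) μ) x) x : ℂ) =
        ∑ i, (starRingEnd ℂ) ((μ *ᵥ (WithLp.equiv 2 _ x)) i) * x i := by
      rw [PiLp.inner_apply]
      congr 1
      funext i
      exact RCLike.inner_apply' _ _
    have hμE2 : (((2*π*r^3:ℝ)):ℂ) • μ =
        !![(2*r^2 : ℂ), (r:ℂ)*(starRingEnd ℂ) ω, ((starRingEnd ℂ) ω)^2;
           (r:ℂ)*ω, (2*r^2 : ℂ), (r:ℂ)*(starRingEnd ℂ) ω;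
           ω^2, (r:ℂ)*ω, (2*r^2 : ℂ)] := by
      rw [hμE]
      ext i j
      fin_cases i <;> fin_cases j <;>
        · simp [Matrix.smul_apply]
          push_cast
          field_simp
          try ring
    have hC : ((2 * π * r^3 : ℝ) : ℂ) * (inner ℂ ((Matrix.toEuclideanCLM (𝕜 := ℂ) μ) x) x : ℂ) =
        (((2*r^2 - 1) * (Complex.normSq (x 0) + Complex.normSq (x 1) + Complex.normSq (x 2))
        + Complex.normSq (ω * x 0 + (r:ℂ) * x 1 + (starRingEnd ℂ) ω * x 2)
        + (1 - r^2) * Complex.normSq (x 1) : ℝ) : ℂ) := by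
      have hstep : ((2 * π * r^3 : ℝ) : ℂ) * (inner ℂ ((Matrix.toEuclideanCLM (𝕜 := ℂ) μ) x) x : ℂ) =
          ∑ i, (starRingEnd ℂ)
            ((!![(2*r^2 : ℂ), (r:ℂ)*(starRingEnd ℂ) ω, ((starRingEnd ℂ) ω)^2;
                (r:ℂ)*ω, (2*r^2 : ℂ), (r:ℂ)*(starRingEnd ℂ) ω;
                ω^2, (r:ℂ)*ω, (2*r^2 : ℂ)] *ᵥ (WithLp.equiv 2 _ x)) i) * x i := by
        rw [hformula, Finset.mul_sum, ← hμE2]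
        refine Finset.sum_congr rfl fun i _ => ?_
        rw [Matrix.smul_mulVec, Pi.smul_apply, smul_eq_mul, _root_.map_mul,
          Complex.conj_ofReal]
        ring
      rw [hstep]
      simp [Matrix.mulVec, dotProduct, Fin.sum_univ_three,
        Matrix.cons_val_zero, Matrix.cons_val_one, Matrix.head_cons,
        Matrix.cons_val_two, Matrix.tail_cons, Matrix.vecHead, Matrix.vecTail,
        PiLp.toLp_apply]
      push_cast
      simp only [← Complex.mul_conj]
      simp only [map_add, _root_.map_mul, map_div₀, map_pow, _root_.map_one, _root_.map_ofNat,
        Complex.conj_ofReal, Complex.conj_conj, map_sub]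
      linear_combination (-(x 0 * (starRingEnd ℂ) (x 0) + x 2 * (starRingEnd ℂ) (x 2))) * hωc
    have h := congrArg Complex.re hC
    rwa [Complex.ofReal_re, Complex.re_ofReal_mul] at h
  have hpos : (0:ℝ) < 2 * π * r^3 := by positivity
  refine ⟨hHerm, ?_, ?_⟩
  · intro x
    have h2 := key x
    have hn := hnorm x
    rw [div_mul_eq_mul_div, div_le_iff₀ hpos, hn]
    have h1r : 0 ≤ 1 - r^2 := by nlinarith
    linarith [h2, Complex.normSq_nonneg (ω * x 0 + (r:ℂ) * x 1 + (starRingEnd ℂ) ω * x 2),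
      mul_nonneg h1r (Complex.normSq_nonneg (x 1))]
  · refine ⟨(WithLp.equiv 2 _).symm ![1, 0, -(ω*ω)], ?_, ?_⟩
    · intro h
      have h0 := congrFun (congrArg (WithLp.equiv 2 _) h) 0
      simp at h0
    · set x : EuclideanSpace ℂ (Fin 3) := (WithLp.equiv 2 _).symm ![1, 0, -(ω*ω)] with hx
      have hx0 : x 0 = 1 := rfl
      have hx1 : x 1 = 0 := rfl
      have hx2 : x 2 = -(ω*ω) := rfl
      have h2 := key x
      have hn := hnorm x
      rw [hx0, hx1, hx2] at h2 hn
      have hzero : ω * 1 + (r:ℂ) * 0 + (starRingEnd ℂ) ω * -(ω*ω) = 0 := by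
        linear_combination (-ω) * hωc
      rw [hzero] at h2
      simp only [Complex.normSq_zero, Complex.normSq_one, Complex.normSq_neg] at h2 hn
      rw [hn]
      have hπr : 2 * π * r^3 ≠ 0 := hpos.ne'
      field_simp at h2 ⊢
      linarith [h2]
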